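/- arXiv:1812.06820 — 2 statements merged into one kernel-verified Lean document; each statement's English description precedes it below -/
import Mathlib

section
/- Let K, U be nonempty convex subsets of a Banach space X such that K ∩ cor U is nonempty, and suppose x₀ ∈ K ∩ cor U and x₀* ∈ T(x₀) satisfy ⟨x₀*, y − x₀⟩ ≥ 0 for all y ∈ K ∩ cor U. Then ⟨x₀*, z − x₀⟩ ≥ 0 for all z ∈ K, i.e. x₀ ∈ S(T, K). -/
open Set Filter

variable {X : Type*} [NormedAddCommGroup X] [NormedSpace ℝ X] [CompleteSpace X]

/-- The set of duality-pairing values `⟨f, y - x⟩` for `f` ranging over `S ⊆ X*`. -/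
def pairSet {X : Type*} [NormedAddCommGroup X] [NormedSpace ℝ X]
    (S : Set (X →L[ℝ] ℝ)) (v : X) : Set ℝ :=
  (fun f : X →L[ℝ] ℝ => f v) '' S

/-- `T` is upper sign-continuous on a convex set `K`. -/
def UpperSignCont {X : Type*} [NormedAddCommGroup X] [NormedSpace ℝ X]
    (T : X → Set (X →L[ℝ] ℝ)) (K : Set X) : Prop :=
  ∀ x ∈ K, ∀ y ∈ K,
    (∀ t ∈ Set.Ioo (0 : ℝ) 1, 0 ≤ sInf (pairSet (T (t • x + (1 - t) • y)) (y - x))) →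
    0 ≤ sSup (pairSet (T x) (y - x))

/-- `T` is lower sign-continuous on a convex set `K`. -/
def LowerSignCont {X : Type*} [NormedAddCommGroup X] [NormedSpace ℝ X]
    (T : X → Set (X →L[ℝ] ℝ)) (K : Set X) : Prop :=
  ∀ x ∈ K, ∀ y ∈ K,
    (∀ t ∈ Set.Ioo (0 : ℝ) 1, 0 ≤ sInf (pairSet (T (t • x + (1 - t) • y)) (y - x))) →
    0 ≤ sInf (pairSet (T x) (y - x))

/-- `T` is locally upper sign-continuous at `x`. -/
def LocallyUpperSignCont {X : Type*} [NormedAddCommGroup X] [NormedSpace ℝ X]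
    (T : X → Set (X →L[ℝ] ℝ)) (x : X) : Prop :=
  ∃ U : Set X, U ∈ nhds x ∧ Convex ℝ U ∧
    ∃ Φ : X → Set (X →L[ℝ] ℝ),
      UpperSignCont Φ U ∧
      ∀ u ∈ U, (Φ u).Nonempty ∧ Convex ℝ (Φ u) ∧
        IsCompact (show Set (WeakDual ℝ X) from Φ u) ∧ Φ u ⊆ T u \ {0}

/-- The convex-hull map of `T`. -/
def convMap {X : Type*} [NormedAddCommGroup X] [NormedSpace ℝ X]
    (T : X → Set (X →L[ℝ] ℝ)) : X → Set (X →L[ℝ] ℝ) :=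
  fun u => convexHull ℝ (T u)

/-- The algebraic interior (core) of a set `A`. -/
def core {X : Type*} [AddCommGroup X] [Module ℝ X] (A : Set X) : Set X :=
  {a ∈ A | ∀ z : X, ∃ l > (0 : ℝ), ∀ t ∈ Set.Ico (0 : ℝ) l, a + t • z ∈ A}

lemma core_segment {X : Type*} [AddCommGroup X] [Module ℝ X] {U : Set X}
    (hUc : Convex ℝ U) {a u : X} (ha : a ∈ core U) (hu : u ∈ U) {t : ℝ}
    (ht0 : 0 ≤ t) (ht1 : t < 1) : a + t • (u - a) ∈ core U := by
  have h1t : (0:ℝ) < 1 - t := by linarith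
  have key : ∀ p ∈ U, (1 - t) • p + t • u = a + t • (u - a) + ((1 - t) • (p - a)) := by
    intro p _
    simp only [smul_sub, sub_smul, one_smul]; abel
  constructor
  · have := hUc ha.1 hu (le_of_lt h1t) ht0 (by ring)
    have e : (1 - t) • a + t • u = a + t • (u - a) := by
      simp only [smul_sub, sub_smul, one_smul]; abel
    rwa [e] at this
  · intro z
    obtain ⟨l, hl, hmem⟩ := ha.2 z
    refine ⟨(1 - t) * l, by positivity, fun s hs => ?_⟩
    obtain ⟨hs0, hsl⟩ := hs
    have hsd : s / (1 - t) ∈ Set.Ico (0:ℝ) l :=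
      ⟨by positivity, (div_lt_iff₀ h1t).mpr (by linarith [hsl])⟩
    have hp : a + (s / (1 - t)) • z ∈ U := hmem _ hsd
    have := hUc hp hu (le_of_lt h1t) ht0 (by ring)
    have e : (1 - t) • (a + (s / (1 - t)) • z) + t • u = a + t • (u - a) + s • z := by
      rw [smul_add, smul_smul, mul_div_cancel₀ s h1t.ne']
      simp only [smul_sub, sub_smul, one_smul]; abel
    rwa [e] at this

theorem stmt_16 (T : X → Set (X →L[ℝ] ℝ)) (K U : Set X)
    (hK : K.Nonempty) (hKc : Convex ℝ K) (hU : U.Nonempty) (hUc : Convex ℝ U)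
    (hKU : (K ∩ core U).Nonempty)
    (x₀ : X) (hx₀ : x₀ ∈ K ∩ core U) (f : X →L[ℝ] ℝ) (hf : f ∈ T x₀)
    (h : ∀ y ∈ K ∩ core U, 0 ≤ f (y - x₀)) :
    ∀ z ∈ K, 0 ≤ f (z - x₀) := by
  intro z hz
  obtain ⟨hx₀K, hx₀U⟩ := hx₀
  obtain ⟨l, hl, hmem⟩ := hx₀U.2 (z - x₀)
  set t₀ : ℝ := min l 1 / 2 with ht₀def
  have ht₀0 : 0 < t₀ := by positivity
  have ht₀l : t₀ < l := by
    have : min l 1 ≤ l := min_le_left _ _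
    simp only [ht₀def]; linarith
  have ht₀1 : t₀ < 1 := by
    have : min l 1 ≤ 1 := min_le_right _ _
    simp only [ht₀def]; linarith
  have hb : x₀ + t₀ • (z - x₀) ∈ U := hmem t₀ ⟨le_of_lt ht₀0, ht₀l⟩
  set s : ℝ := t₀ / 2 with hsdef
  have hs0 : 0 < s := by positivity
  have hs1 : s < 1 := by simp only [hsdef]; linarith
  set y : X := x₀ + s • (z - x₀) with hydef
  have hyU : y ∈ core U := by
    have := core_segment hUc ⟨hx₀U.1, hx₀U.2⟩ hb (by norm_num : (0:ℝ) ≤ 1/2)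
      (by norm_num : (1:ℝ)/2 < 1)
    have e : x₀ + (1/2 : ℝ) • (x₀ + t₀ • (z - x₀) - x₀) = y := by
      rw [hydef, hsdef]
      rw [add_sub_cancel_left, smul_smul]
      congr 1
      ring
    rwa [e] at this
  have hyK : y ∈ K := by
    have := hKc hx₀K hz (by linarith : (0:ℝ) ≤ 1 - s) (le_of_lt hs0) (by ring)
    have e : (1 - s) • x₀ + s • z = y := by
      rw [hydef]; simp only [smul_sub, sub_smul, one_smul]; abel
    rwa [e] at this
  have hfy : 0 ≤ f (y - x₀) := h y ⟨hyK, hyU⟩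
  have e2 : f (y - x₀) = s * f (z - x₀) := by
    rw [hydef, add_sub_cancel_left, map_smul, smul_eq_mul]
  rw [e2] at hfy
  exact nonneg_of_mul_nonneg_right hfy hs0
end

section
/- Let T : X ⇉ X* be quasimonotone with nonempty values, K ⊆ X, x ∈ cor K, and suppose conv T is lower semicontinuous at x. If for every nonzero x* ∈ X* the set T(x) is not contained in ℝ₊₊·x* = {t·x* : t > 0}, then 0 ∈ T(x). Conversely, if 0 ∈ T(x) then T(x) ⊄ ℝ₊₊·x* for every nonzero x*. -/
open Set Filter

variable {X : Type*} [NormedAddCommGroup X] [NormedSpace ℝ X] [CompleteSpace X]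

/-- `T` is quasimonotone (everywhere). -/
def Quasimonotone {X : Type*} [NormedAddCommGroup X] [NormedSpace ℝ X]
    (T : X → Set (X →L[ℝ] ℝ)) : Prop :=
  ∀ x y : X, (∃ f ∈ T x, 0 < f (y - x)) → ∀ g ∈ T y, 0 ≤ g (y - x)

/-- A set-valued map is lower semicontinuous at `x`. -/
def LowerSemicontAt {X : Type*} [NormedAddCommGroup X] [NormedSpace ℝ X]
    (F : X → Set (X →L[ℝ] ℝ)) (x : X) : Prop :=
  ∀ V : Set (X →L[ℝ] ℝ), IsOpen V → (F x ∩ V).Nonempty →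
    ∃ U ∈ nhds x, ∀ u ∈ U, (F u ∩ V).Nonempty

omit [CompleteSpace X] in
lemma sep_aux (f g : X →L[ℝ] ℝ) (hf : f ≠ 0) (hg : g ≠ 0)
    (h : ¬ ∃ t : ℝ, 0 < t ∧ g = t • f) : ∃ d : X, 0 < f d ∧ g d < 0 := by
  by_contra hc
  push_neg at hc
  -- hc : ∀ d, 0 < f d → 0 ≤ g d
  obtain ⟨e0, he0⟩ : ∃ e, f e ≠ 0 := by
    by_contra he; push_neg at he
    exact hf (ContinuousLinearMap.ext fun z => by simp [he z])
  set e : X := (f e0)⁻¹ • e0 with he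
  have hfe : f e = 1 := by simp [he, inv_mul_cancel₀ he0]
  have hge : 0 ≤ g e := hc e (by rw [hfe]; norm_num)
  have hker : ∀ z : X, f z = 0 → g z = 0 := by
    intro z hz
    have h1 : ∀ ε : ℝ, 0 < ε → g z ≤ ε * g e := by
      intro ε hε
      have h2 : 0 < f (ε • e - z) := by simp [hz, hfe, hε]
      have := hc _ h2
      simp only [map_sub, map_smul, smul_eq_mul] at this
      linarith
    have h1' : ∀ ε : ℝ, 0 < ε → -(ε * g e) ≤ g z := by
      intro ε hε
      have h2 : 0 < f (ε • e + z) := by simp [hz, hfe, hε]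
      have := hc _ h2
      simp only [map_add, map_smul, smul_eq_mul] at this
      linarith
    have hub : g z ≤ 0 := by
      by_contra hgz; push_neg at hgz
      rcases eq_or_lt_of_le hge with hge0 | hge0
      · have := h1 1 one_pos; rw [← hge0] at this; linarith
      · have := h1 (g z / (2 * g e)) (by positivity)
        rw [div_mul_eq_mul_div, mul_comm] at this
        have : g z ≤ g z / 2 := by
          calc g z ≤ g e * g z / (2 * g e) := this
          _ = g z / 2 := by field_simp
        linarith
    have hlb : 0 ≤ g z := by
      by_contra hgz; push_neg at hgz
      rcases eq_or_lt_of_le hge with hge0 | hge0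
      · have := h1' 1 one_pos; rw [← hge0] at this; linarith
      · have := h1' (-g z / (2 * g e)) (div_pos (by linarith) (by linarith))
        have h3 : -(-g z / (2 * g e) * g e) = g z / 2 := by field_simp
        rw [h3] at this
        linarith
    linarith
  have hrep : g = g e • f := by
    ext z
    have hz : f (z - f z • e) = 0 := by simp [hfe]
    have := hker _ hz
    simp only [map_sub, map_smul, smul_eq_mul, ContinuousLinearMap.smul_apply] at this ⊢
    linear_combination this
  have hgepos : 0 < g e := by
    rcases eq_or_lt_of_le hge with h0 | h0
    · exact absurd (by rw [hrep, ← h0]; simp) hg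
    · exact h0
  exact h ⟨g e, hgepos, hrep⟩



theorem stmt_19 (T : X → Set (X →L[ℝ] ℝ)) (hq : Quasimonotone T)
    (hne : ∀ u, (T u).Nonempty) (K : Set X) (x : X) (hx : x ∈ core K)
    (hlsc : LowerSemicontAt (convMap T) x) :
    (∀ f : X →L[ℝ] ℝ, f ≠ 0 → ¬ (T x ⊆ {g | ∃ t : ℝ, 0 < t ∧ g = t • f}))
      ↔ (0 : X →L[ℝ] ℝ) ∈ T x := by
  constructor
  · intro h
    by_contra h0
    obtain ⟨xs, hxs⟩ := hne x
    have hxs0 : xs ≠ 0 := fun e => h0 (e ▸ hxs)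
    obtain ⟨ys, hys, hysn⟩ := not_subset.mp (h xs hxs0)
    have hys0 : ys ≠ 0 := fun e => h0 (e ▸ hys)
    obtain ⟨d, hfd, hgd⟩ := sep_aux xs ys hxs0 hys0 hysn
    set V : Set (X →L[ℝ] ℝ) := {g | 0 < g d} with hV
    have hVopen : IsOpen V := by
      have : Continuous fun g : X →L[ℝ] ℝ => g d :=
        (ContinuousLinearMap.apply ℝ ℝ d).continuous
      exact isOpen_lt continuous_const this
    have hVx : (convMap T x ∩ V).Nonempty :=
      ⟨xs, subset_convexHull ℝ _ hxs, hfd⟩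
    obtain ⟨U, hU, hUall⟩ := hlsc V hVopen hVx
    obtain ⟨ε, hε, hball⟩ := Metric.mem_nhds_iff.mp hU
    set s : ℝ := ε / (2 * (‖d‖ + 1)) with hs
    have hd1 : (0:ℝ) ≤ ‖d‖ := norm_nonneg d
    have hspos : 0 < s := by positivity
    have hu : x - s • d ∈ U := by
      apply hball
      simp only [Metric.mem_ball, dist_eq_norm]
      have : x - s • d - x = -(s • d) := by abel
      rw [this, norm_neg, norm_smul, Real.norm_eq_abs, abs_of_pos hspos, hs,
        div_mul_eq_mul_div, div_lt_iff₀ (by positivity)]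
      nlinarith
    obtain ⟨g, hgconv, hgV⟩ := hUall _ hu
    have hsub : convMap T (x - s • d) ⊆ {g : X →L[ℝ] ℝ | g d ≤ 0} := by
      apply convexHull_min
      · intro g' hg'
        have hqm := hq x (x - s • d) ⟨ys, hys, by
          simp only [sub_sub_cancel_left, map_neg, map_smul, smul_eq_mul]
          nlinarith⟩ g' hg'
        simp only [sub_sub_cancel_left, map_neg, map_smul, smul_eq_mul] at hqm
        have : 0 ≤ -(s * g' d) := hqm
        have h2 : g' d ≤ 0 := by nlinarith
        exact h2
      · exact convex_halfSpace_le ⟨fun a b => by simp, fun c a => by simp⟩ 0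
    have h1 : g d ≤ 0 := hsub hgconv
    have h2 : 0 < g d := hgV
    linarith
  · intro h0 f hf hsub
    obtain ⟨t, ht, h0eq⟩ := hsub h0
    apply hf
    ext z
    have h2 := ContinuousLinearMap.ext_iff.mp h0eq.symm z
    simp only [ContinuousLinearMap.smul_apply, smul_eq_mul,
      ContinuousLinearMap.zero_apply, mul_eq_zero] at h2 ⊢
    rcases h2 with h | h
    · exact absurd h (ne_of_gt ht)
    · exact h
end
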